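/- Fix risk level α ∈ (0, 1/2) and σ̲ > 0. The G-VaR with parameters (σ̲, σ̄), namely G-VaR_α(σ̲,σ̄) = −σ̄·Φ⁻¹(α(σ̄+σ̲)/(2σ̄)) (valid when α ≤ σ̄/(σ̄+σ̲)), is monotonically non-decreasing in σ̄ on [σ̲, ∞). In particular model uncertainty (σ̄ > σ̲) yields a VaR at least as large as the classical normal VaR −σ̲Φ⁻¹(α). -/

import Mathlib

open Real Set
open MeasureTheory

theorem stmt_11 (α σl : ℝ) (hα0 : 0 < α) (hα : α < 1 / 2) (hl : 0 < σl)
    (Φ : ℝ → ℝ)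
    (hΦ : ∀ x, Φ x = ∫ t in Set.Iic x, (1 / Real.sqrt (2 * Real.pi)) * Real.exp (-t ^ 2 / 2))
    (Φinv : ℝ → ℝ)
    (hΦinv : ∀ p, 0 < p → p < 1 → Φ (Φinv p) = p)
    (hΦinv' : ∀ x, Φinv (Φ x) = x) :
    MonotoneOn (fun σu => -(σu * Φinv (α * (σu + σl) / (2 * σu)))) (Set.Ici σl) ∧
    ∀ σu : ℝ, σl ≤ σu →
      -(σl * Φinv α) ≤ -(σu * Φinv (α * (σu + σl) / (2 * σu))) := by
  set g : ℝ → ℝ := fun t => (1 / Real.sqrt (2 * Real.pi)) * Real.exp (-t ^ 2 / 2) with hg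
  have hsq : (0:ℝ) < Real.sqrt (2 * Real.pi) := Real.sqrt_pos.mpr (by positivity)
  have hgpos : ∀ t, 0 < g t := fun t => by positivity
  have hgint : Integrable g := by
    have h := (integrable_exp_neg_mul_sq (by norm_num : (0:ℝ) < 1/2)).const_mul
      (1 / Real.sqrt (2 * Real.pi))
    convert h using 2 with t
    simp only [hg]
    ring_nf
  -- Φ strictly monotone
  have hsplit : ∀ x y : ℝ, x ≤ y → Φ y = Φ x + ∫ t in Set.Ioc x y, g t := by
    intro x y hxy
    rw [hΦ, hΦ, ← setIntegral_union (Iic_disjoint_Ioc le_rfl) measurableSet_Ioc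
      hgint.integrableOn hgint.integrableOn, Iic_union_Ioc_eq_Iic hxy]
  have hmono : StrictMono Φ := by
    intro x y hxy
    have h1 := hsplit x y hxy.le
    have h2 : 0 < ∫ t in Set.Ioc x y, g t := by
      rw [← intervalIntegral.integral_of_le hxy.le]
      exact intervalIntegral.intervalIntegral_pos_of_pos_on
        (hgint.intervalIntegrable) (fun t _ => hgpos t) hxy
    linarith
  -- Φ 0 = 1/2
  have htot : ∫ t, g t = 1 := by
    have h := integral_gaussian (1/2 : ℝ)
    have h2 : ∫ t : ℝ, Real.exp (-t ^ 2 / 2) = Real.sqrt (2 * Real.pi) := by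
      rw [show (2:ℝ)*Real.pi = Real.pi/(1/2) by ring, ← h]
      congr 1 with t; ring_nf
    rw [hg]
    simp only [MeasureTheory.integral_const_mul, h2]
    field_simp
  have hsymm : (∫ t in Set.Iic (0:ℝ), g t) = ∫ t in Set.Ioi (0:ℝ), g t := by
    have h := integral_comp_neg_Iic (0:ℝ) g
    rw [neg_zero] at h
    rw [← h]
    congr 1 with t
    simp [hg, neg_pow]
  have hΦ0 : Φ 0 = 1/2 := by
    have h1 : (∫ t in Set.Iic (0:ℝ), g t) + ∫ t in Set.Ioi (0:ℝ), g t = 1 := by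
      rw [← setIntegral_union (Iic_disjoint_Ioi le_rfl) measurableSet_Ioi
        hgint.integrableOn hgint.integrableOn, Iic_union_Ioi, ← htot,
        Measure.restrict_univ]
    rw [hΦ 0]
    rw [← hg] at *
    linarith [hsymm]
  -- Φinv monotone on (0,1) and negative below 1/2
  have hinvmono : ∀ p q : ℝ, 0 < p → p ≤ q → q < 1 → Φinv p ≤ Φinv q := by
    intro p q hp hpq hq
    by_contra hc
    push_neg at hc
    have := hmono hc
    rw [hΦinv p hp (lt_of_le_of_lt hpq hq), hΦinv q (lt_of_lt_of_le hp hpq) hq] at this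
    linarith
  have hinvneg : ∀ p : ℝ, 0 < p → p < 1/2 → Φinv p < 0 := by
    intro p hp hp2
    have h0 : Φinv (1/2) = 0 := by rw [← hΦ0, hΦinv']
    by_contra hc
    push_neg at hc
    have h1 : Φ 0 ≤ Φ (Φinv p) := hmono.monotone hc
    rw [hΦ0, hΦinv p hp (by linarith)] at h1
    linarith
  -- the ratio function
  have hp_bounds : ∀ σ : ℝ, σl ≤ σ → 0 < α * (σ + σl) / (2 * σ) ∧ α * (σ + σl) / (2 * σ) ≤ α := by
    intro σ hσ
    have hσ0 : 0 < σ := lt_of_lt_of_le hl hσ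
    constructor
    · positivity
    · rw [div_le_iff₀ (by linarith)]
      nlinarith
  have hp_anti : ∀ a b : ℝ, σl ≤ a → a ≤ b → α * (b + σl) / (2 * b) ≤ α * (a + σl) / (2 * a) := by
    intro a b ha hab
    have ha0 : 0 < a := lt_of_lt_of_le hl ha
    have hb0 : 0 < b := lt_of_lt_of_le ha0 hab
    rw [div_le_div_iff₀ (by linarith) (by linarith)]
    nlinarith [mul_nonneg (mul_nonneg hα0.le hl.le) (sub_nonneg.mpr hab)]
  have key : MonotoneOn (fun σu => -(σu * Φinv (α * (σu + σl) / (2 * σu)))) (Set.Ici σl) := by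
    intro a ha b hb hab
    simp only [mem_Ici] at ha hb
    have ha0 : 0 < a := lt_of_lt_of_le hl ha
    obtain ⟨hpa0, hpa1⟩ := hp_bounds a ha
    obtain ⟨hpb0, hpb1⟩ := hp_bounds b hb
    have hpab := hp_anti a b ha hab
    have h1 : Φinv (α * (b + σl) / (2 * b)) ≤ Φinv (α * (a + σl) / (2 * a)) :=
      hinvmono _ _ hpb0 hpab (by linarith)
    have h2 : Φinv (α * (a + σl) / (2 * a)) < 0 := hinvneg _ hpa0 (by linarith)
    simp only [neg_mul, neg_le_neg_iff] at *
    calc a * Φinv (α * (a + σl) / (2 * a))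
        ≥ b * Φinv (α * (a + σl) / (2 * a)) := by nlinarith
      _ ≥ b * Φinv (α * (b + σl) / (2 * b)) := by nlinarith
  refine ⟨key, fun σu hσ => ?_⟩
  have heq : α * (σl + σl) / (2 * σl) = α := by
    rw [show σl + σl = 2*σl by ring, mul_div_assoc, div_self (by positivity), mul_one]
  have := key (mem_Ici.mpr le_rfl) (mem_Ici.mpr hσ) hσ
  simpa [heq] using this
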